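/- For a finite hyperplane arrangement 𝒜 in V with ρ(𝒜) = min over nonzero h of the number of hyperplanes of 𝒜 not containing h, the degree-1 component of the inverse system C_{𝒜,−ρ} equals the annihilator (in V*) of the span of the 'large' vectors, i.e., those nonzero h lying on the maximum number of hyperplanes. -/

import Mathlib

open MvPolynomial

/-- The directional derivative ∂_h on polynomials on ℂᵈ. -/
noncomputable def dirDeriv {d : ℕ} (h : Fin d → ℂ) :
    Module.End ℂ (MvPolynomial (Fin d) ℂ) :=
  ∑ i, h i • (pderiv i).toLinearMap

open Classical in
/-- ρ_𝒜(h): the number of hyperplanes of the arrangement (given by the linear forms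
`L i`) not containing `h`. -/
noncomputable def rhoA {d n : ℕ} (L : Fin n → ((Fin d → ℂ) →ₗ[ℂ] ℂ)) (h : Fin d → ℂ) : ℕ :=
  (Finset.univ.filter fun i => L i h ≠ 0).card

lemma single_of_degree_one {σ : Type*} [DecidableEq σ] (m : σ →₀ ℕ)
    (hm : Finsupp.degree m = 1) : ∃ i, m = Finsupp.single i 1 := by
  have hne : m ≠ 0 := by
    intro h; rw [h, map_zero] at hm; exact one_ne_zero hm.symm
  obtain ⟨i, hi⟩ := Finsupp.support_nonempty_iff.2 hne
  refine ⟨i, ?_⟩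
  have hmi : 1 ≤ m i := Nat.one_le_iff_ne_zero.2 (Finsupp.mem_support_iff.1 hi)
  have hsub : m.support ⊆ {i} := by
    intro j hj
    simp only [Finset.mem_singleton]
    by_contra hji
    have h2 : 2 ≤ Finsupp.degree m := by
      have hss : ({i, j} : Finset σ) ⊆ m.support := by
        intro x hx
        simp only [Finset.mem_insert, Finset.mem_singleton] at hx
        rcases hx with rfl | rfl
        · exact hi
        · exact hj
      have := Finset.sum_le_sum_of_subset (f := fun x => m x) hss
      have hsum : m i + m j ≤ ∑ x ∈ ({i, j} : Finset σ), m x := by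
        rw [Finset.sum_insert (by simpa using fun h => hji h.symm), Finset.sum_singleton]
      have hmj : 1 ≤ m j := Nat.one_le_iff_ne_zero.2 (Finsupp.mem_support_iff.1 hj)
      calc 2 ≤ m i + m j := by omega
        _ ≤ ∑ x ∈ ({i, j} : Finset σ), m x := hsum
        _ ≤ Finsupp.degree m := this
    omega
  have hval : m i = 1 := by
    have : Finsupp.degree m = m i := by
      rw [Finsupp.degree_apply]
      rw [Finset.sum_subset hsub (by
        intro x hx hnx
        simp only [Finset.mem_singleton] at hx
        subst hx
        exact Finsupp.notMem_support_iff.1 hnx)]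
      exact Finset.sum_singleton _ _
    omega
  exact (Finsupp.eq_single_iff.2 ⟨hsub, hval⟩)

lemma dirDeriv_C {d : ℕ} (h : Fin d → ℂ) (c : ℂ) :
    dirDeriv h (C c : MvPolynomial (Fin d) ℂ) = 0 := by
  simp [dirDeriv]

lemma dirDeriv_monomial_single {d : ℕ} (h : Fin d → ℂ) (i : Fin d) (c : ℂ) :
    dirDeriv h (monomial (Finsupp.single i 1) c : MvPolynomial (Fin d) ℂ) = C (h i * c) := by
  simp [dirDeriv, pderiv_monomial, Finsupp.single_apply, apply_ite, smul_eq_C_mul,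
    Finset.sum_ite_eq', mul_comm]

lemma dirDeriv_of_homog {d : ℕ} (h : Fin d → ℂ) {f : MvPolynomial (Fin d) ℂ}
    (hf : f.IsHomogeneous 1) : dirDeriv h f = C (eval h f) := by
  conv_lhs => rw [f.as_sum]
  conv_rhs => rw [f.as_sum]
  rw [map_sum, map_sum, map_sum]
  apply Finset.sum_congr rfl
  intro m hm
  obtain ⟨i, rfl⟩ := single_of_degree_one m (by
    have := hf (Finsupp.mem_support_iff.1 hm)
    rwa [Finsupp.degree_eq_weight_one])
  rw [dirDeriv_monomial_single, eval_monomial]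
  simp [Finsupp.prod_single_index, mul_comm]

/-- for an arrangement 𝒜 with minimal value ρ of ρ_𝒜, a degree-1
polynomial f lies in C_{𝒜,−ρ} iff f vanishes on all large vectors (those with
ρ_𝒜(h) = ρ). -/
theorem stmt_6 {d n : ℕ} (L : Fin n → ((Fin d → ℂ) →ₗ[ℂ] ℂ)) (hL : ∀ i, L i ≠ 0)
    (ρ : ℕ) (hmin : ∀ h : Fin d → ℂ, h ≠ 0 → ρ ≤ rhoA L h)
    (hex : ∃ h : Fin d → ℂ, h ≠ 0 ∧ rhoA L h = ρ)
    (f : MvPolynomial (Fin d) ℂ) (hf : f.IsHomogeneous 1) :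
    (∀ h : Fin d → ℂ, h ≠ 0 → (dirDeriv h ^ (rhoA L h - ρ + 1)) f = 0)
      ↔ (∀ h : Fin d → ℂ, h ≠ 0 → rhoA L h = ρ → eval h f = 0) := by
  constructor
  · intro H h hne hlarge
    have := H h hne
    rw [hlarge, Nat.sub_self, pow_one, dirDeriv_of_homog h hf] at this
    exact (C_eq_zero (σ := Fin d)).1 this
  · intro H h hne
    rcases Nat.eq_or_lt_of_le (hmin h hne) with heq | hlt
    · rw [← heq, Nat.sub_self, pow_one, dirDeriv_of_homog h hf, H h hne heq.symm, map_zero]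
    · obtain ⟨k, hk⟩ : ∃ k, rhoA L h - ρ = k + 1 :=
        ⟨rhoA L h - ρ - 1, by omega⟩
      rw [hk, pow_succ, Module.End.mul_apply, dirDeriv_of_homog h hf, pow_succ,
        Module.End.mul_apply, dirDeriv_C, map_zero]
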